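/- Existence of a pairwise low-collision hash family (the combinatorial core of the identification code construction): let Θ be a nonempty finite set, let M' ≥ 2 and N ≥ 2 be integers, and let λ ∈ (1/M', 1). If N² · 2^{−|Θ|(λ log₂ M' − 1)} ≤ 1, then there exist functions F_1, …, F_N : Θ → {1,…,M'} such that for all i ≠ j in {1,…,N}, |{θ ∈ Θ : F_i(θ) = F_j(θ)}| ≤ λ|Θ|. -/

import Mathlib

open Finset

/-- Existence of a pairwise low-collision hash family: if
`N² · 2^{-|Θ|(λ log₂ M' - 1)} ≤ 1`, then there exist `N` functions `F_i : Θ → [M']`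
any two of which collide on at most `λ|Θ|` points. -/
theorem exists_pairwise_low_collision_hash_family
    {Θ : Type*} [Fintype Θ] [Nonempty Θ] [DecidableEq Θ]
    (M' N : ℕ) (hM : 2 ≤ M') (hN : 2 ≤ N)
    (lam : ℝ) (hlam1 : 1 / (M' : ℝ) < lam) (hlam2 : lam < 1)
    (hcond : (N : ℝ) ^ 2 *
      2 ^ (-(Fintype.card Θ : ℝ) * (lam * Real.logb 2 M' - 1)) ≤ 1) :
    ∃ F : Fin N → Θ → Fin M', ∀ i j, i ≠ j →
      (((univ.filter fun θ => F i θ = F j θ).card : ℝ)) ≤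
        lam * (Fintype.card Θ : ℝ) := by
  classical
  set n := Fintype.card Θ with hn
  have hn1 : 1 ≤ n := Fintype.card_pos
  have hM0 : (0:ℝ) < M' := by positivity
  have hM1 : (1:ℝ) < M' := by exact_mod_cast lt_of_lt_of_le one_lt_two (by exact_mod_cast hM)
  have hlam0 : (0:ℝ) < lam := lt_trans (by positivity) hlam1
  have hnpos : (0:ℝ) < n := by exact_mod_cast hn1
  set k := Nat.floor (lam * n) + 1 with hk
  have hkgt : lam * n < k := by
    push_cast
    exact_mod_cast Nat.lt_floor_add_one (lam * (n:ℝ))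
  have hkn : k ≤ n := by
    have h1 : lam * n < n := by nlinarith
    have := (Nat.floor_lt (by positivity)).mpr h1
    omega
  -- the key real inequality : N^2 * 2^n < M'^k
  have key : (N:ℝ)^2 * 2^(n:ℕ) < (M':ℝ)^(k:ℕ) := by
    set L := Real.logb 2 M' with hL
    have hM'eq : (M':ℝ) = (2:ℝ) ^ L := (Real.rpow_logb two_pos (by norm_num) hM0).symm
    have h2 : (2:ℝ)^(n:ℕ) = (2:ℝ) ^ ((n:ℝ)) := by
      rw [Real.rpow_natCast]
    have hMk : (M':ℝ)^(k:ℕ) = (2:ℝ) ^ (L * k) := by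
      rw [hM'eq, ← Real.rpow_natCast ((2:ℝ)^L) k, ← Real.rpow_mul (by norm_num)]
    have hsplit : (N:ℝ)^2 * 2^(n:ℕ)
        = ((N:ℝ)^2 * 2 ^ (-(n:ℝ) * (lam * L - 1))) * 2 ^ ((n:ℝ) * (lam * L)) := by
      rw [h2, mul_assoc, ← Real.rpow_add two_pos]
      ring_nf
    have hle : (N:ℝ)^2 * 2^(n:ℕ) ≤ 2 ^ ((n:ℝ) * (lam * L)) := by
      rw [hsplit]
      have hpos : (0:ℝ) < 2 ^ ((n:ℝ) * (lam * L)) := Real.rpow_pos_of_pos two_pos _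
      nlinarith
    have hlt : (2:ℝ) ^ ((n:ℝ) * (lam * L)) < 2 ^ (L * k) := by
      apply (Real.rpow_lt_rpow_left_iff one_lt_two).mpr
      have hLpos : 0 < L := Real.logb_pos one_lt_two hM1
      have : (n:ℝ) * (lam * L) = L * (lam * n) := by ring
      rw [this]
      exact mul_lt_mul_of_pos_left hkgt hLpos
    rw [hMk]
    exact lt_of_le_of_lt hle hlt
  -- the bad set
  set Bad : Finset (Fin N → Θ → Fin M') := univ.filter (fun ω => ∃ i j, i ≠ j ∧
      lam * n < ((univ.filter fun θ => ω i θ = ω j θ).card : ℝ)) with hBad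
  -- per (i,j,S) bound
  have cardA : ∀ (i j : Fin N), i ≠ j → ∀ S : Finset Θ, S.card = k →
      (univ.filter fun ω : Fin N → Θ → Fin M' => ∀ θ ∈ S, ω i θ = ω j θ).card
        ≤ M' ^ (N * n - k) := by
    intro i j hij S hS
    have hcard : Fintype.card {q : Fin N × Θ // ¬(q.1 = j ∧ q.2 ∈ S)} = N * n - k := by
      rw [Fintype.card_subtype_compl]
      have h1 : Fintype.card {q : Fin N × Θ // q.1 = j ∧ q.2 ∈ S} = k := by
        rw [Fintype.card_subtype]
        have : (univ.filter fun q : Fin N × Θ => q.1 = j ∧ q.2 ∈ S) = {j} ×ˢ S := by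
          ext q
          simp only [mem_filter, mem_univ, true_and, Finset.mem_product,
            Finset.mem_singleton]
        rw [this, Finset.card_product, Finset.card_singleton, one_mul, hS]
      rw [h1, Fintype.card_prod, Fintype.card_fin]
    calc (univ.filter fun ω : Fin N → Θ → Fin M' => ∀ θ ∈ S, ω i θ = ω j θ).card
        ≤ (univ : Finset ({q : Fin N × Θ // ¬(q.1 = j ∧ q.2 ∈ S)} → Fin M')).card := by
          apply Finset.card_le_card_of_injOn
            (fun ω => fun q => ω q.1.1 q.1.2)
          · intro ω _; exact mem_univ _
          · intro ω₁ h₁ ω₂ h₂ heq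
            simp only [mem_coe, mem_filter] at h₁ h₂
            funext l θ
            by_cases hc : l = j ∧ θ ∈ S
            · obtain ⟨hlj, hθS⟩ := hc
              rw [hlj]
              have e1 : ω₁ i θ = ω₁ j θ := h₁.2 θ hθS
              have e2 : ω₂ i θ = ω₂ j θ := h₂.2 θ hθS
              have e3 : ω₁ i θ = ω₂ i θ := by
                have := congrFun heq ⟨(i, θ), by simp [hij]⟩
                simpa using this
              rw [← e1, e3, e2]
            · have := congrFun heq ⟨(l, θ), hc⟩
              simpa using this
      _ = M' ^ (N * n - k) := by
          rw [Finset.card_univ, Fintype.card_fun, Fintype.card_fin, hcard]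
  -- covering of Bad
  have hcover : Bad ⊆ (univ : Finset (Fin N)).offDiag.biUnion (fun p =>
      (Finset.powersetCard k (univ : Finset Θ)).biUnion (fun S =>
        univ.filter fun ω : Fin N → Θ → Fin M' => ∀ θ ∈ S, ω p.1 θ = ω p.2 θ)) := by
    intro ω hω
    rw [hBad, mem_filter] at hω
    obtain ⟨-, i, j, hij, hcol⟩ := hω
    set T := univ.filter fun θ => ω i θ = ω j θ with hT
    have hkT : k ≤ T.card := by
      have : Nat.floor (lam * n) < T.card :=
        (Nat.floor_lt (by positivity)).mpr hcol
      omega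
    obtain ⟨S, hS1, hS2⟩ := Finset.exists_subset_card_eq hkT
    refine Finset.mem_biUnion.mpr ⟨(i, j), ?_, Finset.mem_biUnion.mpr ⟨S, ?_, ?_⟩⟩
    · simp [Finset.mem_offDiag, hij]
    · exact Finset.mem_powersetCard.mpr ⟨Finset.subset_univ _, hS2⟩
    · refine mem_filter.mpr ⟨mem_univ _, fun θ hθ => ?_⟩
      have := hS1 hθ
      rw [hT, mem_filter] at this
      exact this.2
  -- counting Bad
  have hBadcard : Bad.card ≤ N ^ 2 * (2 ^ n * M' ^ (N * n - k)) := by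
    calc Bad.card ≤ _ := Finset.card_le_card hcover
      _ ≤ ∑ p ∈ (univ : Finset (Fin N)).offDiag,
          ((Finset.powersetCard k (univ : Finset Θ)).biUnion (fun S =>
            univ.filter fun ω : Fin N → Θ → Fin M' => ∀ θ ∈ S, ω p.1 θ = ω p.2 θ)).card :=
          Finset.card_biUnion_le
      _ ≤ (univ : Finset (Fin N)).offDiag.card • (2 ^ n * M' ^ (N * n - k)) := by
          apply Finset.sum_le_card_nsmul
          intro p hp
          have hp' : p.1 ≠ p.2 := (Finset.mem_offDiag.mp hp).2.2
          calc _ ≤ ∑ S ∈ Finset.powersetCard k (univ : Finset Θ),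
                (univ.filter fun ω : Fin N → Θ → Fin M' =>
                  ∀ θ ∈ S, ω p.1 θ = ω p.2 θ).card := Finset.card_biUnion_le
            _ ≤ (Finset.powersetCard k (univ : Finset Θ)).card • (M' ^ (N * n - k)) := by
                apply Finset.sum_le_card_nsmul
                intro S hS
                exact cardA p.1 p.2 hp' S (Finset.mem_powersetCard.mp hS).2
            _ ≤ 2 ^ n * M' ^ (N * n - k) := by
                rw [smul_eq_mul, Finset.card_powersetCard, Finset.card_univ]
                apply Nat.mul_le_mul_right
                calc n.choose k ≤ ∑ m ∈ Finset.range (n + 1), n.choose m :=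
                      Finset.single_le_sum (fun _ _ => Nat.zero_le _)
                        (Finset.mem_range.mpr (by omega))
                  _ = 2 ^ n := Nat.sum_range_choose n
      _ ≤ N ^ 2 * (2 ^ n * M' ^ (N * n - k)) := by
          rw [smul_eq_mul]
          apply Nat.mul_le_mul_right
          rw [Finset.offDiag_card, Finset.card_univ, Fintype.card_fin, pow_two]
          exact Nat.sub_le _ _
  -- Bad is not everything
  have hlt : Bad.card < Fintype.card (Fin N → Θ → Fin M') := by
    have hcardΩ : Fintype.card (Fin N → Θ → Fin M') = M' ^ (N * n) := by
      rw [Fintype.card_fun, Fintype.card_fun, Fintype.card_fin, Fintype.card_fin,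
        ← pow_mul, mul_comm]
    rw [hcardΩ]
    have h1 : (Bad.card : ℝ) ≤ (N:ℝ) ^ 2 * (2 ^ n * (M':ℝ) ^ (N * n - k)) := by
      exact_mod_cast hBadcard
    have h2 : (N:ℝ) ^ 2 * (2 ^ n * (M':ℝ) ^ (N * n - k)) < (M':ℝ) ^ (N * n) := by
      have hpow : (M':ℝ) ^ (N * n) = (M':ℝ) ^ k * (M':ℝ) ^ (N * n - k) := by
        rw [← pow_add]
        congr 1
        have : k ≤ N * n := le_trans hkn (Nat.le_mul_of_pos_left n (by omega))
        omega
      rw [hpow, ← mul_assoc]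
      apply mul_lt_mul_of_pos_right key (by positivity)
    have : (Bad.card : ℝ) < ((M' ^ (N * n) : ℕ) : ℝ) := by
      push_cast
      exact lt_of_le_of_lt h1 h2
    exact_mod_cast this
  -- extract a good ω
  have hex : ∃ ω, ω ∉ Bad := by
    by_contra h
    push_neg at h
    have : Bad = univ := Finset.eq_univ_iff_forall.mpr h
    rw [this, Finset.card_univ] at hlt
    exact lt_irrefl _ hlt
  obtain ⟨ω, hω⟩ := hex
  refine ⟨ω, fun i j hij => ?_⟩
  rw [hBad, mem_filter] at hω
  push_neg at hω
  exact hω (mem_univ _) i j hij
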